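/- In Wood's reduction network after deleting a set D ⊆ A₁ of edge-nodes, the maximum s-t flow equals the number of vertices of G incident to at least one edge in E \ D. -/
import Mathlib


open Finset

/-- A feasible `s`-`t` flow on a finite directed network with capacities `cap`. -/
structure NetworkFlow {N : Type*} [Fintype N] [DecidableEq N]
    (cap : N → N → ℝ) (s t : N) where
  f : N → N → ℝ
  nonneg : ∀ u v, 0 ≤ f u v
  capacity : ∀ u v, f u v ≤ cap u v
  conservation : ∀ v, v ≠ s → v ≠ t → (∑ u, f u v) = (∑ u, f v u)

/-- The value of a flow: net outflow at the source. -/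
def NetworkFlow.value {N : Type*} [Fintype N] [DecidableEq N]
    {cap : N → N → ℝ} {s t : N} (F : NetworkFlow cap s t) : ℝ :=
  (∑ v, F.f s v) - (∑ v, F.f v s)

/-- `M` is the maximum flow value of the network. -/
def IsMaxFlowValue {N : Type*} [Fintype N] [DecidableEq N]
    (cap : N → N → ℝ) (s t : N) (M : ℝ) : Prop :=
  IsGreatest {v : ℝ | ∃ F : NetworkFlow cap s t, F.value = v} M

/-- Node set of Wood's reduction network: source, edge-layer `A₁`, vertex-layer `A₂`, sink. -/
abbrev WoodNode (V : Type*) := Unit ⊕ Sym2 V ⊕ V ⊕ Unit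

/-- Capacities of Wood's reduction network after interdicting the edge-node set `D`:
`s → e` capacity 2 for surviving `e ∈ E \ D`, `e → v` capacity 1 when `v ∈ e` survives,
`v → t` capacity 1; all other capacities 0. -/
def woodCap {V : Type*} [Fintype V] [DecidableEq V] (G : SimpleGraph V)
    [DecidableRel G.Adj] (D : Finset (Sym2 V)) : WoodNode V → WoodNode V → ℝ
  | Sum.inl _, Sum.inr (Sum.inl e) => if e ∈ G.edgeFinset \ D then 2 else 0
  | Sum.inr (Sum.inl e), Sum.inr (Sum.inr (Sum.inl v)) =>
      if e ∈ G.edgeFinset \ D ∧ v ∈ e then 1 else 0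
  | Sum.inr (Sum.inr (Sum.inl _)), Sum.inr (Sum.inr (Sum.inr _)) => 1
  | _, _ => 0

/-- The source node. -/
def woodSource (V : Type*) : WoodNode V := Sum.inl ()

/-- The sink node. -/
def woodSink (V : Type*) : WoodNode V := Sum.inr (Sum.inr (Sum.inr ()))

section Aux

variable {V : Type*} [Fintype V] [DecidableEq V]

/-- Pick a surviving edge containing `v`, if one exists. -/
noncomputable def pickEdge (G : SimpleGraph V) [DecidableRel G.Adj] (D : Finset (Sym2 V))
    (v : V) : Option (Sym2 V) :=
  if h : ∃ e ∈ G.edgeFinset \ D, v ∈ e then some h.choose else none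

lemma pickEdge_spec {G : SimpleGraph V} [DecidableRel G.Adj] {D : Finset (Sym2 V)} {v : V}
    {e : Sym2 V} (h : pickEdge G D v = some e) : e ∈ G.edgeFinset \ D ∧ v ∈ e := by
  unfold pickEdge at h
  split at h
  · rename_i hex
    obtain ⟨h1, h2⟩ := hex.choose_spec
    cases h
    exact ⟨h1, h2⟩
  · exact absurd h (by simp)

lemma isSome_pickEdge_iff {G : SimpleGraph V} [DecidableRel G.Adj] {D : Finset (Sym2 V)}
    {v : V} : (pickEdge G D v).isSome ↔ ∃ e ∈ G.edgeFinset \ D, v ∈ e := by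
  unfold pickEdge
  constructor
  · intro h
    split at h
    · assumption
    · simp at h
  · intro h
    rw [dif_pos h]
    rfl

lemma card_filter_mem_sym2 (e : Sym2 V) : (Finset.univ.filter (· ∈ e)).card ≤ 2 := by
  induction e using Sym2.ind with
  | _ a b =>
    have hsub : (Finset.univ.filter (· ∈ s(a, b))) ⊆ {a, b} := by
      intro x hx
      simp only [Finset.mem_filter, Sym2.mem_iff] at hx
      simp [hx.2]
    calc (Finset.univ.filter (· ∈ s(a, b))).card ≤ ({a, b} : Finset V).card :=
          Finset.card_le_card hsub
      _ ≤ 2 := Finset.card_insert_le _ _ |>.trans (by simp)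

/-- The explicit optimal flow. -/
noncomputable def woodFlow (G : SimpleGraph V) [DecidableRel G.Adj] (D : Finset (Sym2 V)) :
    WoodNode V → WoodNode V → ℝ
  | Sum.inl _, Sum.inr (Sum.inl e) =>
      ∑ v : V, if pickEdge G D v = some e then 1 else 0
  | Sum.inr (Sum.inl e), Sum.inr (Sum.inr (Sum.inl v)) =>
      if pickEdge G D v = some e then 1 else 0
  | Sum.inr (Sum.inr (Sum.inl v)), Sum.inr (Sum.inr (Sum.inr _)) =>
      if (pickEdge G D v).isSome then 1 else 0
  | _, _ => 0

/-- Any flow's value equals the inflow at the sink, provided the sink has no outgoing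
capacity. -/
lemma flow_value_eq_sum_into_sink {N : Type*} [Fintype N] [DecidableEq N]
    {cap : N → N → ℝ} {s t : N} (hst : s ≠ t) (hcap : ∀ u, cap t u = 0)
    (F : NetworkFlow cap s t) : F.value = ∑ u, F.f u t := by
  have hout : ∀ u, F.f t u = 0 := fun u =>
    le_antisymm (by simpa [hcap u] using F.capacity t u) (F.nonneg t u)
  set g : N → ℝ := fun x => (∑ y, F.f x y) - (∑ y, F.f y x) with hg
  have h0 : ∑ x, g x = 0 := by
    simp only [hg, Finset.sum_sub_distrib]
    rw [Finset.sum_comm]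
    ring
  have hpair : ∑ x ∈ ({s, t} : Finset N), g x = ∑ x, g x := by
    refine Finset.sum_subset (Finset.subset_univ _) ?_
    intro x _ hx
    simp only [Finset.mem_insert, Finset.mem_singleton, not_or] at hx
    simp only [hg, sub_eq_zero]
    exact (F.conservation x hx.1 hx.2).symm
  rw [Finset.sum_pair hst] at hpair
  have hgt : g t = -(∑ y, F.f y t) := by
    simp [hg, hout]
  have : g s + g t = 0 := hpair.trans h0
  have hgs : g s = ∑ y, F.f y t := by
    rw [hgt] at this; linarith
  simpa [NetworkFlow.value, hg] using hgs

/-- A flow vanishes on arcs of zero capacity. -/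
lemma NetworkFlow.f_eq_zero {N : Type*} [Fintype N] [DecidableEq N]
    {cap : N → N → ℝ} {s t : N} (F : NetworkFlow cap s t) {u v : N}
    (h : cap u v = 0) : F.f u v = 0 :=
  le_antisymm (h ▸ F.capacity u v) (F.nonneg u v)

end Aux

set_option maxHeartbeats 2000000 in
/-- After deleting an edge-node set `D`, the maximum `s`-`t` flow of Wood's
reduction network equals the number of vertices incident to some edge of `E \ D`. -/
theorem wood_max_flow_after_interdiction {V : Type*} [Fintype V] [DecidableEq V]
    (G : SimpleGraph V) [DecidableRel G.Adj] (D : Finset (Sym2 V)) (hD : D ⊆ G.edgeFinset) :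
    IsMaxFlowValue (woodCap G D) (woodSource V) (woodSink V)
      ((Finset.univ.filter (fun v : V => ∃ e ∈ G.edgeFinset \ D, v ∈ e)).card : ℝ) := by
  classical
  set S := Finset.univ.filter (fun v : V => ∃ e ∈ G.edgeFinset \ D, v ∈ e) with hS
  have hst : woodSource V ≠ woodSink V := by simp [woodSource, woodSink]
  constructor
  · -- the explicit flow achieves the value
    refine ⟨⟨woodFlow G D, ?_, ?_, ?_⟩, ?_⟩
    · -- nonneg
      intro u v
      rcases u with _ | (e | (w | _)) <;> rcases v with _ | (e' | (w' | _)) <;>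
        simp only [woodFlow] <;>
        first
          | exact le_refl 0
          | (apply Finset.sum_nonneg; intro x _; split <;> norm_num)
          | (split <;> norm_num)
    · -- capacity
      have capA : ∀ (u : Unit) (e' : Sym2 V),
          woodFlow G D (Sum.inl u) (Sum.inr (Sum.inl e'))
            ≤ woodCap G D (Sum.inl u) (Sum.inr (Sum.inl e')) := by
        intro u e'
        show (∑ x : V, if pickEdge G D x = some e' then (1 : ℝ) else 0)
            ≤ (if e' ∈ G.edgeFinset \ D then 2 else 0)
        by_cases he : e' ∈ G.edgeFinset \ D
        · rw [if_pos he, Finset.sum_boole]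
          have h1 : (Finset.univ.filter (fun v => pickEdge G D v = some e')) ⊆
              Finset.univ.filter (· ∈ e') := by
            intro x hx
            simp only [Finset.mem_filter] at hx ⊢
            exact ⟨hx.1, (pickEdge_spec hx.2).2⟩
          have h2 := (Finset.card_le_card h1).trans (card_filter_mem_sym2 e')
          exact_mod_cast h2
        · rw [if_neg he]
          apply le_of_eq
          apply Finset.sum_eq_zero
          intro x _
          rw [if_neg]
          intro hp
          exact he (pickEdge_spec hp).1
      have capB : ∀ (e : Sym2 V) (w' : V),
          woodFlow G D (Sum.inr (Sum.inl e)) (Sum.inr (Sum.inr (Sum.inl w')))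
            ≤ woodCap G D (Sum.inr (Sum.inl e)) (Sum.inr (Sum.inr (Sum.inl w'))) := by
        intro e w'
        show (if pickEdge G D w' = some e then (1 : ℝ) else 0)
            ≤ (if e ∈ G.edgeFinset \ D ∧ w' ∈ e then 1 else 0)
        by_cases hp : pickEdge G D w' = some e
        · rw [if_pos hp, if_pos ⟨(pickEdge_spec hp).1, (pickEdge_spec hp).2⟩]
        · rw [if_neg hp]
          split <;> norm_num
      have capC : ∀ (w : V) (u : Unit),
          woodFlow G D (Sum.inr (Sum.inr (Sum.inl w))) (Sum.inr (Sum.inr (Sum.inr u)))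
            ≤ woodCap G D (Sum.inr (Sum.inr (Sum.inl w))) (Sum.inr (Sum.inr (Sum.inr u))) := by
        intro w u
        show (if (pickEdge G D w).isSome then (1 : ℝ) else 0) ≤ 1
        split <;> norm_num
      intro u v
      rcases u with _ | (e | (w | _)) <;> rcases v with _ | (e' | (w' | _)) <;>
        first
          | exact capA _ e'
          | exact capB e w'
          | exact capC w _
          | (show (0 : ℝ) ≤ 0; exact le_rfl)
    · -- conservation
      intro v h1 h2
      rcases v with _ | (e | (w | _))
      · exact absurd rfl h1
      · -- edge node
        simp [Fintype.sum_sum_type, woodFlow]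
      · -- vertex node
        simp only [Fintype.sum_sum_type, woodFlow, Finset.univ_unique,
          Finset.sum_singleton, Finset.sum_const_zero, add_zero, zero_add]
        rcases hw : pickEdge G D w with _ | e0
        · simp [hw]
        · simp [hw, Finset.sum_ite_eq, Finset.sum_ite_eq']
      · exact absurd rfl h2
    · -- value
      show (∑ u, woodFlow G D (woodSource V) u) - (∑ u, woodFlow G D u (woodSource V))
          = (S.card : ℝ)
      have hin : (∑ u, woodFlow G D u (woodSource V)) = 0 := by
        apply Finset.sum_eq_zero
        intro u _
        rcases u with _ | (e | (w | _)) <;> rfl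
      rw [hin, sub_zero]
      have hout : (∑ u, woodFlow G D (woodSource V) u)
          = ∑ e : Sym2 V, ∑ v : V, if pickEdge G D v = some e then (1 : ℝ) else 0 := by
        simp [Fintype.sum_sum_type, woodSource, woodFlow]
      rw [hout, Finset.sum_comm]
      have hv : ∀ v : V, (∑ e : Sym2 V, if pickEdge G D v = some e then (1 : ℝ) else 0)
          = if v ∈ S then 1 else 0 := by
        intro v
        have hmem : v ∈ S ↔ (pickEdge G D v).isSome := by
          simp only [hS, Finset.mem_filter, Finset.mem_univ, true_and]
          exact isSome_pickEdge_iff.symm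
        rcases hw : pickEdge G D v with _ | e0
        · simp [hw, hmem]
        · simp [hw, hmem, Finset.sum_ite_eq, Finset.sum_ite_eq']
      rw [Finset.sum_congr rfl (fun v _ => hv v), Finset.sum_boole]
      simp
  · -- upper bound
    rintro x ⟨F, rfl⟩
    have hcap0 : ∀ u, woodCap G D (woodSink V) u = 0 := by
      intro u
      rcases u with _ | (e | (w | _)) <;> rfl
    rw [flow_value_eq_sum_into_sink hst hcap0 F]
    have hsplit : (∑ u, F.f u (woodSink V)) = ∑ w : V, F.f (Sum.inr (Sum.inr (Sum.inl w)))
        (woodSink V) := by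
      rw [Fintype.sum_sum_type, Fintype.sum_sum_type, Fintype.sum_sum_type]
      have z1 : ∀ u : Unit, F.f (Sum.inl u) (woodSink V) = 0 := fun u => F.f_eq_zero rfl
      have z2 : ∀ e : Sym2 V, F.f (Sum.inr (Sum.inl e)) (woodSink V) = 0 := fun e => by
        apply F.f_eq_zero
        rfl
      have z3 : ∀ u : Unit, F.f (Sum.inr (Sum.inr (Sum.inr u))) (woodSink V) = 0 :=
        fun u => F.f_eq_zero rfl
      simp [z1, z2, z3]
    rw [hsplit]
    have hpt : ∀ w : V, F.f (Sum.inr (Sum.inr (Sum.inl w))) (woodSink V)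
        ≤ if w ∈ S then (1 : ℝ) else 0 := by
      intro w
      by_cases hw : w ∈ S
      · rw [if_pos hw]
        exact F.capacity _ _
      · rw [if_neg hw]
        simp only [hS, Finset.mem_filter, Finset.mem_univ, true_and, not_exists] at hw
        -- no inflow into w, hence no outflow
        have hin0 : (∑ u, F.f u (Sum.inr (Sum.inr (Sum.inl w)))) = 0 := by
          apply Finset.sum_eq_zero
          intro u _
          apply F.f_eq_zero
          rcases u with _ | (e | (w' | _))
          · rfl
          · show (if e ∈ G.edgeFinset \ D ∧ w ∈ e then (1:ℝ) else 0) = 0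
            rw [if_neg]
            rintro ⟨he, hwe⟩
            exact hw e ⟨he, hwe⟩
          · rfl
          · rfl
        have hcons := F.conservation (Sum.inr (Sum.inr (Sum.inl w)))
          (by simp [woodSource]) (by simp [woodSink])
        have hout0 : (∑ u, F.f (Sum.inr (Sum.inr (Sum.inl w))) u) = 0 := by
          rw [← hcons, hin0]
        calc F.f (Sum.inr (Sum.inr (Sum.inl w))) (woodSink V)
            ≤ ∑ u, F.f (Sum.inr (Sum.inr (Sum.inl w))) u :=
              Finset.single_le_sum (fun u _ => F.nonneg _ u) (Finset.mem_univ _)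
          _ = 0 := hout0
    calc (∑ w : V, F.f (Sum.inr (Sum.inr (Sum.inl w))) (woodSink V))
        ≤ ∑ w : V, if w ∈ S then (1 : ℝ) else 0 :=
          Finset.sum_le_sum (fun w _ => hpt w)
      _ = (S.card : ℝ) := by
          rw [Finset.sum_boole]
          congr 1
          simp
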